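/- (Proposition 1) The fix-up phase of the insertion algorithm for 2-3 red-black trees terminates: starting from the tree obtained by inserting a new red leaf into a 2-3 red-black tree, each application of a fix-up rule moves the marked violating node strictly closer to the root, hence the number of fix-up rule applications is at most the height of the tree; after the fix-up phase and recoloring the root black, the resulting tree is a valid 2-3 red-black tree whose key set is the original key set together with the inserted key. -/

import Mathlib

inductive Color where
  | red : Color
  | black : Color
deriving DecidableEq

inductive RBTree (α : Type) where
  | nil : RBTree α
  | node : Color → RBTree α → α → RBTree α → RBTree α

namespace RBTree

variable {α : Type}

/-- The color of a tree's root; external (nil) positions count as black. -/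
def color : RBTree α → Color
  | .nil => Color.black
  | .node c _ _ _ => c

/-- Inorder traversal of the keys. -/
def inorder : RBTree α → List α
  | .nil => []
  | .node _ l k r => inorder l ++ k :: inorder r

/-- `BH t n`: every path from the root of `t` to an external node contains
exactly `n` black nodes (property (3)). -/
inductive BH : RBTree α → ℕ → Prop where
  | nil : BH RBTree.nil 0
  | red {l r : RBTree α} {k : α} {n : ℕ} :
      BH l n → BH r n → BH (RBTree.node Color.red l k r) n
  | black {l r : RBTree α} {k : α} {n : ℕ} :
      BH l n → BH r n → BH (RBTree.node Color.black l k r) (n + 1)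

/-- Property (2): every red node has black children (equivalently, a red node
never has a red parent). -/
def NoRedRed : RBTree α → Prop
  | .nil => True
  | .node c l _ r =>
      (c = Color.red → color l = Color.black ∧ color r = Color.black) ∧
      NoRedRed l ∧ NoRedRed r

/-- The 2-3 condition: no node has two red children. -/
def No2Red : RBTree α → Prop
  | .nil => True
  | .node _ l _ r =>
      ¬(color l = Color.red ∧ color r = Color.red) ∧ No2Red l ∧ No2Red r

/-- A red-black tree: black root, no red-red violation, uniform black counts. -/
def IsRB (t : RBTree α) : Prop :=
  color t = Color.black ∧ NoRedRed t ∧ ∃ n, BH t n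

/-- A 2-3 red-black tree: a red-black tree where no node has two red children. -/
def Is23RB (t : RBTree α) : Prop := IsRB t ∧ No2Red t

/-- Recolor the root black. -/
def setBlack : RBTree α → RBTree α
  | .nil => .nil
  | .node _ l k r => .node Color.black l k r

/-- `Occurs s t`: `s` occurs as a subtree of `t`. -/
inductive Occurs : RBTree α → RBTree α → Prop where
  | refl (t : RBTree α) : Occurs t t
  | left {s l : RBTree α} (c : Color) (k : α) (r : RBTree α) :
      Occurs s l → Occurs s (RBTree.node c l k r)
  | right {s r : RBTree α} (c : Color) (k : α) (l : RBTree α) :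
      Occurs s r → Occurs s (RBTree.node c l k r)

/-- `Replace s s' t t'`: `t'` is obtained from `t` by replacing one
occurrence of the subtree `s` by `s'`. -/
inductive Replace (s s' : RBTree α) : RBTree α → RBTree α → Prop where
  | here : Replace s s' s s'
  | left {l l' : RBTree α} (c : Color) (k : α) (r : RBTree α) :
      Replace s s' l l' → Replace s s' (RBTree.node c l k r) (RBTree.node c l' k r)
  | right {r r' : RBTree α} (c : Color) (k : α) (l : RBTree α) :
      Replace s s' r r' → Replace s s' (RBTree.node c l k r) (RBTree.node c l k r')

/-- The list of black-node counts along all root-to-external paths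
(in left-to-right order of the external nodes). -/
def bpaths : RBTree α → List ℕ
  | .nil => [0]
  | .node c l _ r =>
      (bpaths l ++ bpaths r).map (fun m => m + if c = Color.black then 1 else 0)

/-- Height: the maximum number of edges on a path from the root to an external node. -/
def height : RBTree α → ℕ
  | .nil => 0
  | .node _ l _ r => max (height l) (height r) + 1

/-- Number of internal nodes. -/
def size : RBTree α → ℕ
  | .nil => 0
  | .node _ l _ r => size l + size r + 1

end RBTree

namespace RBTree

variable {α : Type}

/-- Fix-up at a black node whose left subtree was just rebuilt by insertion.
Returns the fixed subtree together with the number of fix-up rule applications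
(color flip or rotation) performed here (`0` or `1`).
Rule (ii): if both children are red, recolor the children black and this node red.
Rule (i): if the left child and one of its children are red (with black sibling),
perform the single or double rotation with recoloring. -/
def insFixL : RBTree α → α → RBTree α → RBTree α × ℕ
  | l, k, r =>
    if color l = Color.red ∧ color r = Color.red then
      (RBTree.node Color.red (setBlack l) k (setBlack r), 1)
    else
      match l, k, r with
      | RBTree.node Color.red (RBTree.node Color.red a kx b) kp c, kg, d =>
          (RBTree.node Color.red (RBTree.node Color.black a kx b) kp
            (RBTree.node Color.black c kg d), 1)
      | RBTree.node Color.red a kp (RBTree.node Color.red b kx c), kg, d =>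
          (RBTree.node Color.red (RBTree.node Color.black a kp b) kx
            (RBTree.node Color.black c kg d), 1)
      | l, kg, r => (RBTree.node Color.black l kg r, 0)

/-- Fix-up at a black node whose right subtree was just rebuilt by insertion
(mirror image of `insFixL`). -/
def insFixR : RBTree α → α → RBTree α → RBTree α × ℕ
  | l, k, r =>
    if color l = Color.red ∧ color r = Color.red then
      (RBTree.node Color.red (setBlack l) k (setBlack r), 1)
    else
      match l, k, r with
      | a, kg, RBTree.node Color.red b kp (RBTree.node Color.red c kx d) =>
          (RBTree.node Color.red (RBTree.node Color.black a kg b) kp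
            (RBTree.node Color.black c kx d), 1)
      | a, kg, RBTree.node Color.red (RBTree.node Color.red b kx c) kp d =>
          (RBTree.node Color.red (RBTree.node Color.black a kg b) kx
            (RBTree.node Color.black c kp d), 1)
      | l, kg, r => (RBTree.node Color.black l kg r, 0)

/-- Insertion into a 2-3 red-black tree: place the new key in a red leaf at
the position dictated by binary-search-tree order and apply the fix-up rules
bottom-up along the insertion path.  Returns the resulting tree together with
the total number of fix-up rule applications. -/
def insAux [LinearOrder α] (k : α) : RBTree α → RBTree α × ℕ
  | .nil => (RBTree.node Color.red RBTree.nil k RBTree.nil, 0)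
  | .node Color.black l x r =>
      if k < x then
        let p := insAux k l
        let q := insFixL p.1 x r
        (q.1, p.2 + q.2)
      else if x < k then
        let p := insAux k r
        let q := insFixR l x p.1
        (q.1, p.2 + q.2)
      else (RBTree.node Color.black l x r, 0)
  | .node Color.red l x r =>
      if k < x then
        let p := insAux k l
        (RBTree.node Color.red p.1 x r, p.2)
      else if x < k then
        let p := insAux k r
        (RBTree.node Color.red l x p.1, p.2)
      else (RBTree.node Color.red l x r, 0)

/-- The insertion algorithm: insert, fix up, and finally recolor the root black. -/
def insert [LinearOrder α] (k : α) (t : RBTree α) : RBTree α :=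
  setBlack (insAux k t).1

/-- The number of fix-up rule applications performed while inserting `k`. -/
def insertFixupCount [LinearOrder α] (k : α) (t : RBTree α) : ℕ :=
  (insAux k t).2

end RBTree

namespace RBTree

variable {α : Type}

/- ### Auxiliary lemmas for the insertion proof -/

lemma setBlack_inorder (t : RBTree α) : inorder (setBlack t) = inorder t := by
  cases t <;> simp [setBlack, inorder]

/-- All local invariants together with black-height `n`. -/
def OK (t : RBTree α) (n : ℕ) : Prop := NoRedRed t ∧ No2Red t ∧ BH t n

/-- A possibly-violating tree produced by insertion: a red root whose two
subtrees are fine and whose two children are not both red. -/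
def Viol (t : RBTree α) (n : ℕ) : Prop :=
  ∃ a y b, t = RBTree.node Color.red a y b ∧ OK a n ∧ OK b n ∧
    ¬(color a = Color.red ∧ color b = Color.red)

lemma bh_red {a b : RBTree α} {y : α} {n : ℕ} (h : BH (RBTree.node Color.red a y b) n) :
    BH a n ∧ BH b n := by cases h; exact ⟨‹_›, ‹_›⟩

lemma bh_black {a b : RBTree α} {y : α} {n : ℕ} (h : BH (RBTree.node Color.black a y b) n) :
    ∃ m, n = m + 1 ∧ BH a m ∧ BH b m := by cases h; exact ⟨_, rfl, ‹_›, ‹_›⟩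

lemma OK_red_shape {t : RBTree α} {n : ℕ} (h : OK t n) (hc : color t = Color.red) :
    ∃ a y b, t = RBTree.node Color.red a y b ∧ OK a n ∧ OK b n ∧
      color a = Color.black ∧ color b = Color.black := by
  obtain ⟨hnr, h2, hb⟩ := h
  cases t with
  | nil => simp [color] at hc
  | node c a y b =>
    cases c with
    | black => simp [color] at hc
    | red =>
      obtain ⟨hca, hcb⟩ := hnr.1 rfl
      exact ⟨a, y, b, rfl, ⟨hnr.2.1, h2.2.1, (bh_red hb).1⟩,
        ⟨hnr.2.2, h2.2.2, (bh_red hb).2⟩, hca, hcb⟩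

lemma viol_shape {t : RBTree α} {n : ℕ} (h : OK t n ∨ Viol t n)
    (hc : color t = Color.red) :
    ∃ a y b, t = RBTree.node Color.red a y b ∧ OK a n ∧ OK b n ∧
      ¬(color a = Color.red ∧ color b = Color.red) := by
  rcases h with h | h
  · obtain ⟨a, y, b, rfl, ha, hb, hca, hcb⟩ := OK_red_shape h hc
    exact ⟨a, y, b, rfl, ha, hb, by simp [hca]⟩
  · exact h

lemma setBlack_ok {t : RBTree α} {n : ℕ} (h : OK t n ∨ Viol t n)
    (hc : color t = Color.red) : OK (setBlack t) (n + 1) := by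
  obtain ⟨a, y, b, rfl, ⟨hnra, h2a, hba⟩, ⟨hnrb, h2b, hbb⟩, h2⟩ := viol_shape h hc
  simp only [setBlack]
  exact ⟨⟨by simp, hnra, hnrb⟩, ⟨h2, h2a, h2b⟩, BH.black hba hbb⟩

lemma ok_of_viol_black {t : RBTree α} {n : ℕ} (h : Viol t n)
    (h1 : ∀ a kx b kp c, t ≠ RBTree.node Color.red (RBTree.node Color.red a kx b) kp c)
    (h2 : ∀ a kp b kx c, t ≠ RBTree.node Color.red a kp (RBTree.node Color.red b kx c)) :
    OK t n := by
  obtain ⟨a, y, b, rfl, ⟨hnra, h2a, hba⟩, ⟨hnrb, h2b, hbb⟩, hboth⟩ := h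
  have hca : color a = Color.black := by
    cases a with
    | nil => rfl
    | node ca a1 x1 a2 =>
      cases ca with
      | red => exact absurd rfl (h1 a1 x1 a2 y b)
      | black => rfl
  have hcb : color b = Color.black := by
    cases b with
    | nil => rfl
    | node cb b1 x1 b2 =>
      cases cb with
      | red => exact absurd rfl (h2 a y b1 x1 b2)
      | black => rfl
  exact ⟨⟨fun _ => ⟨hca, hcb⟩, hnra, hnrb⟩, ⟨by simp [hca], h2a, h2b⟩, BH.red hba hbb⟩

lemma insFixL_cnt {l r : RBTree α} {k : α} : (insFixL l k r).2 ≤ 1 := by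
  unfold insFixL; split; split
  · simp
  · split <;> simp

lemma insFixR_cnt {l r : RBTree α} {k : α} : (insFixR l k r).2 ≤ 1 := by
  unfold insFixR; split; split
  · simp
  · split <;> simp

lemma insFixL_inorder {l r : RBTree α} {k : α} :
    inorder (insFixL l k r).1 = inorder l ++ k :: inorder r := by
  unfold insFixL; split; split
  · simp [inorder, setBlack_inorder]
  · split <;> simp [inorder]

lemma insFixR_inorder {l r : RBTree α} {k : α} :
    inorder (insFixR l k r).1 = inorder l ++ k :: inorder r := by
  unfold insFixR; split; split
  · simp [inorder, setBlack_inorder]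
  · split <;> simp [inorder]

lemma color_setBlack (t : RBTree α) : color (setBlack t) = Color.black := by
  cases t <;> rfl

lemma color_black_of_ne {t : RBTree α} (h : ¬ color t = Color.red) :
    color t = Color.black := by
  cases hc : color t
  · exact absurd hc h
  · rfl

lemma insFixL_ok {l r : RBTree α} {k : α} {n : ℕ}
    (hl : OK l n ∨ Viol l n) (hr : OK r n) : OK (insFixL l k r).1 (n + 1) := by
  unfold insFixL; split; split
  case isTrue h =>
    have hl' := setBlack_ok hl h.1
    have hr' := setBlack_ok (Or.inl hr) h.2
    exact ⟨⟨fun _ => ⟨color_setBlack l, color_setBlack r⟩, hl'.1, hr'.1⟩,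
      ⟨by simp [color_setBlack], hl'.2.1, hr'.2.1⟩, BH.red hl'.2.2 hr'.2.2⟩
  case isFalse h =>
    split
    · -- single/double rotation, left-left case
      rename_i a kx b kp c
      obtain ⟨a', y', b', heq, ha', hc', hboth⟩ := viol_shape hl rfl
      injection heq with _ h1 h2 h3
      subst h1; subst h2; subst h3
      obtain ⟨hnra', h2a', hba'⟩ := ha'
      obtain ⟨hca, hcb⟩ := hnra'.1 rfl
      obtain ⟨hba, hbb⟩ := bh_red hba'
      obtain ⟨hnrc, h2c, hbc⟩ := hc'
      obtain ⟨hnrr, h2r, hbr⟩ := hr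
      have hcc : color c = Color.black := by
        apply color_black_of_ne; intro hcc; exact hboth ⟨rfl, hcc⟩
      exact ⟨⟨fun _ => ⟨rfl, rfl⟩, ⟨by simp [color], hnra'.2.1, hnra'.2.2⟩,
          ⟨by simp [color], hnrc, hnrr⟩⟩,
        ⟨by simp [color], ⟨by simp [hca], h2a'.2.1, h2a'.2.2⟩, ⟨by simp [hcc], h2c, h2r⟩⟩,
        BH.red (BH.black hba hbb) (BH.black hbc hbr)⟩
    · -- single/double rotation, left-right case
      rename_i a kp b kx c _hno
      obtain ⟨a', y', b', heq, ha', hc', hboth⟩ := viol_shape hl rfl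
      injection heq with _ h1 h2 h3
      subst h1; subst h2; subst h3
      obtain ⟨hnrc', h2c', hbc'⟩ := hc'
      obtain ⟨hcb, hcc⟩ := hnrc'.1 rfl
      obtain ⟨hbb, hbc⟩ := bh_red hbc'
      obtain ⟨hnra, h2a, hba⟩ := ha'
      obtain ⟨hnrr, h2r, hbr⟩ := hr
      have hca : color a = Color.black := by
        apply color_black_of_ne; intro hca; exact hboth ⟨hca, rfl⟩
      exact ⟨⟨fun _ => ⟨rfl, rfl⟩, ⟨by simp [color], hnra, hnrc'.2.1⟩,
          ⟨by simp [color], hnrc'.2.2, hnrr⟩⟩,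
        ⟨by simp [color], ⟨by simp [hca], h2a, h2c'.2.1⟩, ⟨by simp [hcc], h2c'.2.2, h2r⟩⟩,
        BH.red (BH.black hba hbb) (BH.black hbc hbr)⟩
    · -- no rule applies: just make the node black again
      rename_i hno1 hno2
      have hOKl : OK l n := by
        rcases hl with hOK | hviol
        · exact hOK
        · exact ok_of_viol_black hviol (fun a kx b kp c he => hno1 a kx b kp c he)
            (fun a kp b kx c he => hno2 a kp b kx c he)
      obtain ⟨hnrl, h2l, hbl⟩ := hOKl
      obtain ⟨hnrr, h2r, hbr⟩ := hr
      exact ⟨⟨by simp, hnrl, hnrr⟩, ⟨h, h2l, h2r⟩, BH.black hbl hbr⟩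

lemma insFixR_ok {l r : RBTree α} {k : α} {n : ℕ}
    (hl : OK l n) (hr : OK r n ∨ Viol r n) : OK (insFixR l k r).1 (n + 1) := by
  unfold insFixR; split; split
  case isTrue h =>
    have hl' := setBlack_ok (Or.inl hl) h.1
    have hr' := setBlack_ok hr h.2
    exact ⟨⟨fun _ => ⟨color_setBlack l, color_setBlack r⟩, hl'.1, hr'.1⟩,
      ⟨by simp [color_setBlack], hl'.2.1, hr'.2.1⟩, BH.red hl'.2.2 hr'.2.2⟩
  case isFalse h =>
    split
    · -- right-right case
      rename_i b kp c kx d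
      obtain ⟨a', y', b', heq, hb', hc', hboth⟩ := viol_shape hr rfl
      injection heq with _ h1 h2 h3
      subst h1; subst h2; subst h3
      obtain ⟨hnrc', h2c', hbc'⟩ := hc'
      obtain ⟨hcc, hcd⟩ := hnrc'.1 rfl
      obtain ⟨hbc, hbd⟩ := bh_red hbc'
      obtain ⟨hnrb, h2b, hbb⟩ := hb'
      obtain ⟨hnrl, h2l, hbl⟩ := hl
      have hcb : color b = Color.black := by
        apply color_black_of_ne; intro hcb; exact hboth ⟨hcb, rfl⟩
      exact ⟨⟨fun _ => ⟨rfl, rfl⟩, ⟨by simp [color], hnrl, hnrb⟩,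
          ⟨by simp [color], hnrc'.2.1, hnrc'.2.2⟩⟩,
        ⟨by simp [color], ⟨by simp [hcb], h2l, h2b⟩, ⟨by simp [hcc], h2c'.2.1, h2c'.2.2⟩⟩,
        BH.red (BH.black hbl hbb) (BH.black hbc hbd)⟩
    · -- right-left case
      rename_i b kx c kp d _hno
      obtain ⟨a', y', b', heq, hb', hc', hboth⟩ := viol_shape hr rfl
      injection heq with _ h1 h2 h3
      subst h1; subst h2; subst h3
      obtain ⟨hnrb', h2b', hbb'⟩ := hb'
      obtain ⟨hcb, hcc⟩ := hnrb'.1 rfl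
      obtain ⟨hbb, hbc⟩ := bh_red hbb'
      obtain ⟨hnrd, h2d, hbd⟩ := hc'
      obtain ⟨hnrl, h2l, hbl⟩ := hl
      exact ⟨⟨fun _ => ⟨rfl, rfl⟩, ⟨by simp [color], hnrl, hnrb'.2.1⟩,
          ⟨by simp [color], hnrb'.2.2, hnrd⟩⟩,
        ⟨by simp [color], ⟨by simp [hcb], h2l, h2b'.2.1⟩, ⟨by simp [hcc], h2b'.2.2, h2d⟩⟩,
        BH.red (BH.black hbl hbb) (BH.black hbc hbd)⟩
    · -- no rule applies
      rename_i hno1 hno2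
      have hOKr : OK r n := by
        rcases hr with hOK | hviol
        · exact hOK
        · exact ok_of_viol_black hviol (fun a kx b kp c he => hno2 a kx b kp c he)
            (fun a kp b kx c he => hno1 a kp b kx c he)
      obtain ⟨hnrr, h2r, hbr⟩ := hOKr
      obtain ⟨hnrl, h2l, hbl⟩ := hl
      exact ⟨⟨by simp, hnrl, hnrr⟩, ⟨h, h2l, h2r⟩, BH.black hbl hbr⟩

/-- Each fix-up step moves the violation up; the total number of rule
applications is bounded by the height plus one. -/
lemma insAux_cnt [LinearOrder α] (k : α) (t : RBTree α) :
    (insAux k t).2 ≤ height t + 1 := by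
  induction t with
  | nil => simp [insAux]
  | node c l x r ihl ihr =>
    cases c with
    | black =>
      simp only [insAux]
      split
      · have := insFixL_cnt (l := (insAux k l).1) (r := r) (k := x)
        simp only [height] at *
        omega
      · split
        · have := insFixR_cnt (l := l) (r := (insAux k r).1) (k := x)
          simp only [height] at *
          omega
        · simp
    | red =>
      simp only [insAux]
      split
      · simp only [height] at *
        omega
      · split
        · simp only [height] at *
          omega
        · simp

set_option maxHeartbeats 1000000 in
lemma insAux_inorder [LinearOrder α] (k : α) (t : RBTree α) (x : α) :
    x ∈ inorder (insAux k t).1 ↔ x ∈ inorder t ∨ x = k := by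
  induction t with
  | nil => simp [insAux, inorder]
  | node c y z r ihl ihr =>
    have hkey : ¬ k < z → ¬ z < k → k = z := fun h1 h2 => le_antisymm (not_lt.1 h2) (not_lt.1 h1)
    cases c with
    | black =>
      simp only [insAux]
      split
      · simp only [insFixL_inorder, inorder, List.mem_append, List.mem_cons] at *
        tauto
      · split
        · simp only [insFixR_inorder, inorder, List.mem_append, List.mem_cons] at *
          tauto
        · rename_i h1 h2
          have := hkey h1 h2
          subst this
          simp only [inorder, List.mem_append, List.mem_cons]
          constructor
          · tauto
          · rintro ((h | h) | rfl) <;> tauto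
    | red =>
      simp only [insAux]
      split
      · simp only [inorder, List.mem_append, List.mem_cons] at *
        tauto
      · split
        · simp only [inorder, List.mem_append, List.mem_cons] at *
          tauto
        · rename_i h1 h2
          have := hkey h1 h2
          subst this
          simp only [inorder, List.mem_append, List.mem_cons]
          constructor
          · tauto
          · rintro ((h | h) | rfl) <;> tauto

lemma insAux_ok [LinearOrder α] (k : α) {t : RBTree α} {n : ℕ} (h : OK t n) :
    (color t = Color.black → OK (insAux k t).1 n) ∧
    (color t = Color.red → OK (insAux k t).1 n ∨ Viol (insAux k t).1 n) := by
  induction t generalizing n with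
  | nil =>
    obtain ⟨-, -, hb⟩ := h
    cases hb
    refine ⟨fun _ => ?_, fun hc => by simp [color] at hc⟩
    exact ⟨⟨fun _ => ⟨rfl, rfl⟩, trivial, trivial⟩, ⟨by simp [color], trivial, trivial⟩,
      BH.red BH.nil BH.nil⟩
  | node c l z r ihl ihr =>
    obtain ⟨hnr, h2, hb⟩ := h
    cases c with
    | black =>
      refine ⟨fun _ => ?_, fun hc => by simp [color] at hc⟩
      obtain ⟨m, rfl, hbl, hbr⟩ := bh_black hb
      simp only [insAux]
      split
      · -- k < z : recurse left, then fix up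
        have hl' : OK (insAux k l).1 m ∨ Viol (insAux k l).1 m := by
          have ih := ihl ⟨hnr.2.1, h2.2.1, hbl⟩
          cases hcl : color l with
          | black => exact Or.inl (ih.1 hcl)
          | red => exact ih.2 hcl
        exact insFixL_ok hl' ⟨hnr.2.2, h2.2.2, hbr⟩
      · split
        · have hr' : OK (insAux k r).1 m ∨ Viol (insAux k r).1 m := by
            have ih := ihr ⟨hnr.2.2, h2.2.2, hbr⟩
            cases hcr : color r with
            | black => exact Or.inl (ih.1 hcr)
            | red => exact ih.2 hcr
          exact insFixR_ok ⟨hnr.2.1, h2.2.1, hbl⟩ hr'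
        · exact ⟨hnr, h2, hb⟩
    | red =>
      refine ⟨fun hc => by simp [color] at hc, fun _ => ?_⟩
      obtain ⟨hcl, hcr⟩ := hnr.1 rfl
      obtain ⟨hbl, hbr⟩ := bh_red hb
      simp only [insAux]
      split
      · have hl' : OK (insAux k l).1 n := (ihl ⟨hnr.2.1, h2.2.1, hbl⟩).1 hcl
        exact Or.inr ⟨(insAux k l).1, z, r, rfl, hl', ⟨hnr.2.2, h2.2.2, hbr⟩,
          by simp [hcr]⟩
      · split
        · have hr' : OK (insAux k r).1 n := (ihr ⟨hnr.2.2, h2.2.2, hbr⟩).1 hcr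
          exact Or.inr ⟨l, z, (insAux k r).1, rfl, ⟨hnr.2.1, h2.2.1, hbl⟩, hr',
            by simp [hcl]⟩
        · exact Or.inl ⟨hnr, h2, hb⟩

lemma is23_setBlack {t : RBTree α} {n : ℕ} (h : OK t n) : Is23RB (setBlack t) := by
  obtain ⟨hnr, h2, hb⟩ := h
  cases t with
  | nil => exact ⟨⟨rfl, trivial, ⟨0, BH.nil⟩⟩, trivial⟩
  | node c l z r =>
    have hbh : ∃ m, BH (RBTree.node Color.black l z r) m := by
      cases hb with
      | red a b => exact ⟨_, BH.black a b⟩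
      | black a b => exact ⟨_, BH.black a b⟩
    exact ⟨⟨rfl, ⟨by simp, hnr.2.1, hnr.2.2⟩, hbh⟩, h2.1, h2.2.1, h2.2.2⟩

end RBTree

open RBTree

/-- Proposition 1: The fix-up phase of the insertion algorithm
for 2-3 red-black trees terminates (the algorithm is a total function); the
number of fix-up rule applications is bounded by the height of the tree being
fixed (the original tree with the new red leaf attached, whose height is at
most `height t + 1`); and after the fix-up phase and recoloring the root
black, the resulting tree is a valid 2-3 red-black tree whose key set is the
original key set together with the inserted key. -/
theorem insert_fixup_terminates_and_correct
    {α : Type} [LinearOrder α] (t : RBTree α) (k : α)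
    (h23 : Is23RB t) (hbst : List.Pairwise (· < ·) (inorder t)) :
    Is23RB (RBTree.insert k t) ∧
    (∀ x, x ∈ inorder (RBTree.insert k t) ↔ x ∈ inorder t ∨ x = k) ∧
    insertFixupCount k t ≤ height t + 1 := by
  obtain ⟨⟨hc, hnrr, n, hbh⟩, h2⟩ := h23
  have hOK : OK t n := ⟨hnrr, h2, hbh⟩
  have hres : OK (insAux k t).1 n := (insAux_ok k hOK).1 hc
  refine ⟨is23_setBlack hres, fun x => ?_, insAux_cnt k t⟩
  rw [RBTree.insert, setBlack_inorder]
  exact insAux_inorder k t x
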